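/- Let δ > 0 be real and define, for spin variables s₂, s₃, s₄, s₅ ∈ {−1, +1}, the penalty function P(s₂,s₃,s₄,s₅) = (δ/2)·(4 + s₂s₃ + (s₂ + s₃)s₄ + 2(1 − s₂ − s₃ − s₄)s₅ − s₂ − s₃ − s₄). Then for all s₂, s₃, s₄ ∈ {−1,+1}: min over s₅ ∈ {−1,+1} of P(s₂,s₃,s₄,s₅) equals 0 if s₄ = s₂·s₃, and equals δ if s₄ ≠ s₂·s₃. -/

import Mathlib

/-- The 2-local penalty part of the paper's 3-local gadget with two mediator
spins (Equation (10)):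
`P(s₂,s₃,s₄,s₅) = (δ/2)(4 + s₂s₃ + (s₂+s₃)s₄ + 2(1 − s₂ − s₃ − s₄)s₅ − s₂ − s₃ − s₄)`. -/
noncomputable def Ppen (δ s₂ s₃ s₄ s₅ : ℝ) : ℝ :=
  (δ / 2) * (4 + s₂ * s₃ + (s₂ + s₃) * s₄ + 2 * (1 - s₂ - s₃ - s₄) * s₅
    - s₂ - s₃ - s₄)

/-- For `δ > 0` and spins `s₂,s₃,s₄ ∈ {−1,+1}`, minimizing the penalty `P` over
the mediator spin `s₅ ∈ {−1,+1}` gives `0` if `s₄ = s₂·s₃`, and `δ` otherwise. -/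
theorem eqv_spin_penalty
    (δ : ℝ) (hδ : 0 < δ)
    (s₂ s₃ s₄ : ℝ) (h₂ : s₂ = -1 ∨ s₂ = 1) (h₃ : s₃ = -1 ∨ s₃ = 1)
    (h₄ : s₄ = -1 ∨ s₄ = 1) :
    (s₄ = s₂ * s₃ → min (Ppen δ s₂ s₃ s₄ (-1)) (Ppen δ s₂ s₃ s₄ 1) = 0) ∧
    (s₄ ≠ s₂ * s₃ → min (Ppen δ s₂ s₃ s₄ (-1)) (Ppen δ s₂ s₃ s₄ 1) = δ) := by
  rcases h₂ with h₂ | h₂ <;> rcases h₃ with h₃ | h₃ <;> rcases h₄ with h₄ | h₄ <;>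
    subst h₂ <;> subst h₃ <;> subst h₄ <;>
    refine ⟨fun h => ?_, fun h => ?_⟩ <;>
    simp only [Ppen] <;> norm_num at h <;> norm_num at ⊢ <;>
    (try rw [min_def]) <;> (try split_ifs) <;> nlinarith
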